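/- Let n, r ∈ ℕ with r ≤ n and let w ∈ {0,1}^n. Define f : {0,1}^n → ℤ/4ℤ by f(x) = Σ_{j=1}^{r} (1 + 2w_j)·x_j + 2·Σ_{i=r+1}^{n} w_i·x_i, computed in ℤ/4ℤ with the coordinates x_i ∈ {0,1} regarded as elements of ℤ/4ℤ. (i) If w_i = 1 for some i with r < i ≤ n, then N_0(f) = N_2(f) and N_1(f) = N_3(f). (ii) If w_i = 0 for all i with r < i ≤ n, let t = #{j ≤ r : w_j = 1}, s = r − t, d = min(s,t), m = r − 2d, write m = 4a + b with 0 ≤ b ≤ 3, and set η = 1 if t > s and η = 0 otherwise. Then: if b = 0, N_0(f) − N_2(f) = (−1)^a·2^{(2n−r)/2} and N_1(f) − N_3(f) = 0; if b = 1, N_0(f) − N_2(f) = (−1)^a·2^{(2n−r−1)/2} and N_1(f) − N_3(f) = (−1)^{a+η}·2^{(2n−r−1)/2}; if b = 2, N_0(f) − N_2(f) = 0 and N_1(f) − N_3(f) = (−1)^{a+η}·2^{(2n−r)/2}; if b = 3, N_0(f) − N_2(f) = (−1)^{a+1}·2^{(2n−r−1)/2} and N_1(f) − N_3(f) = (−1)^{a+η}·2^{(2n−r−1)/2}.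 -/

import Mathlib

open Finset

namespace Stmt3Aux

abbrev GI := GaussianInt

def chi (c : ZMod 4) : GI := (⟨0, 1⟩ : GI) ^ c.val

def AA : GI := ⟨1, -1⟩
def BB : GI := ⟨1, 1⟩

lemma chi_zero : chi 0 = 1 := by decide
lemma chi_add : ∀ a b : ZMod 4, chi (a + b) = chi a * chi b := by decide

lemma one_add_chi0 : 1 + chi 0 = 2 := by decide
lemma one_add_chi1 : 1 + chi 1 = BB := by decide
lemma one_add_chi2 : 1 + chi 2 = 0 := by decide
lemma one_add_chi3 : 1 + chi 3 = AA := by decide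

lemma AB_mul : AA * BB = 2 := by decide
lemma AA_four : AA ^ 4 = -4 := by decide
lemma BB_four : BB ^ 4 = -4 := by decide

lemma fin2 : ∀ v : Fin 2, v = 0 ∨ v = 1 := by decide

lemma chi_sum {ι : Type*} (s : Finset ι) (g : ι → ZMod 4) :
    chi (∑ j ∈ s, g j) = ∏ j ∈ s, chi (g j) := by
  classical
  induction s using Finset.induction_on with
  | empty => simp [chi_zero]
  | insert _ _ ha ih => simp [Finset.sum_insert ha, Finset.prod_insert ha, chi_add, ih]

lemma sum_zmod4 (g : ZMod 4 → GI) : ∑ c : ZMod 4, g c = g 0 + g 1 + g 2 + g 3 := by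
  have h : (Finset.univ : Finset (ZMod 4)) = {0, 1, 2, 3} := by decide
  rw [h]
  rw [Finset.sum_insert (by decide), Finset.sum_insert (by decide),
    Finset.sum_insert (by decide), Finset.sum_singleton]
  ring

lemma neg_four_pow (a : ℕ) : ((-4 : GI)) ^ a = (-1) ^ a * 2 ^ (2 * a) := by
  rw [show (-4 : GI) = (-1) * 2 ^ 2 by norm_num, mul_pow, ← pow_mul]

lemma comp_eq (k : ℤ) (u : GI) (X Y : ℤ)
    (h : ((k : GI)) * u = ⟨X, Y⟩) : X = k * u.re ∧ Y = k * u.im := by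
  constructor
  · have := congrArg Zsqrtd.re h
    simp [Zsqrtd.re_mul, Zsqrtd.re_intCast, Zsqrtd.im_intCast] at this
    exact this.symm
  · have := congrArg Zsqrtd.im h
    simp [Zsqrtd.im_mul, Zsqrtd.re_intCast, Zsqrtd.im_intCast] at this
    exact this.symm

end Stmt3Aux

/-- `Ncount n f c` is the number of 0-1 vectors `x` with `f x = c` in `ℤ/4ℤ`. -/
def Ncount (n : ℕ) (f : (Fin n → Fin 2) → ZMod 4) (c : ZMod 4) : ℕ :=
  (Finset.univ.filter fun x => f x = c).card

open Stmt3Aux in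
theorem stmt_3 (n r : ℕ) (hr : r ≤ n) (w : Fin n → Fin 2)
    (f : (Fin n → Fin 2) → ZMod 4)
    (hf : ∀ x, f x =
      (∑ j ∈ Finset.univ.filter fun j : Fin n => j.1 < r,
        (1 + 2 * ((w j : ℕ) : ZMod 4)) * ((x j : ℕ) : ZMod 4)) +
      2 * ∑ i ∈ Finset.univ.filter fun i : Fin n => r ≤ i.1,
        ((w i : ℕ) : ZMod 4) * ((x i : ℕ) : ZMod 4)) :
    -- (i)
    ((∃ i : Fin n, r ≤ i.1 ∧ w i = 1) →
      Ncount n f 0 = Ncount n f 2 ∧ Ncount n f 1 = Ncount n f 3) ∧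
    -- (ii)
    ((∀ i : Fin n, r ≤ i.1 → w i = 0) →
      ∀ t s d m a b η : ℕ,
        t = (Finset.univ.filter fun j : Fin n => j.1 < r ∧ w j = 1).card →
        s = r - t → d = min s t → m = r - 2 * d → m = 4 * a + b → b ≤ 3 →
        η = (if s < t then 1 else 0) →
        ((b = 0 →
            (Ncount n f 0 : ℤ) - (Ncount n f 2 : ℤ) = (-1) ^ a * 2 ^ ((2 * n - r) / 2) ∧
            (Ncount n f 1 : ℤ) - (Ncount n f 3 : ℤ) = 0) ∧
         (b = 1 →
            (Ncount n f 0 : ℤ) - (Ncount n f 2 : ℤ) = (-1) ^ a * 2 ^ ((2 * n - r - 1) / 2) ∧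
            (Ncount n f 1 : ℤ) - (Ncount n f 3 : ℤ) = (-1) ^ (a + η) * 2 ^ ((2 * n - r - 1) / 2)) ∧
         (b = 2 →
            (Ncount n f 0 : ℤ) - (Ncount n f 2 : ℤ) = 0 ∧
            (Ncount n f 1 : ℤ) - (Ncount n f 3 : ℤ) = (-1) ^ (a + η) * 2 ^ ((2 * n - r) / 2)) ∧
         (b = 3 →
            (Ncount n f 0 : ℤ) - (Ncount n f 2 : ℤ) = (-1) ^ (a + 1) * 2 ^ ((2 * n - r - 1) / 2) ∧
            (Ncount n f 1 : ℤ) - (Ncount n f 3 : ℤ) = (-1) ^ (a + η) * 2 ^ ((2 * n - r - 1) / 2)))) := by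
  classical
  set c : Fin n → ZMod 4 := fun j =>
    if j.1 < r then 1 + 2 * ((w j : ℕ) : ZMod 4) else 2 * ((w j : ℕ) : ZMod 4) with hc
  have hf' : ∀ x, f x = ∑ j : Fin n, c j * ((x j : ℕ) : ZMod 4) := by
    intro x
    rw [hf]
    rw [← Finset.sum_filter_add_sum_filter_not Finset.univ (fun j : Fin n => j.1 < r)
      (fun j => c j * ((x j : ℕ) : ZMod 4))]
    congr 1
    · refine Finset.sum_congr rfl fun j hj => ?_
      simp only [Finset.mem_filter] at hj
      simp [hc, hj.2]
    · rw [show (Finset.univ.filter fun i : Fin n => r ≤ i.1)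
          = (Finset.univ.filter fun i : Fin n => ¬ i.1 < r) by simp [not_lt]]
      rw [Finset.mul_sum]
      refine Finset.sum_congr rfl fun j hj => ?_
      simp only [Finset.mem_filter] at hj
      simp [hc, hj.2, mul_assoc]
  have key : (∏ j : Fin n, (1 + chi (c j)))
      = ⟨(Ncount n f 0 : ℤ) - (Ncount n f 2 : ℤ), (Ncount n f 1 : ℤ) - (Ncount n f 3 : ℤ)⟩ := by
    have h1 : ∑ x : Fin n → Fin 2, chi (f x) = ∏ j : Fin n, (1 + chi (c j)) := by
      calc ∑ x : Fin n → Fin 2, chi (f x)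
          = ∑ x : Fin n → Fin 2, ∏ j : Fin n, chi (c j * ((x j : ℕ) : ZMod 4)) := by
            exact Finset.sum_congr rfl fun x _ => by rw [hf' x, chi_sum]
        _ = ∏ j : Fin n, ∑ v : Fin 2, chi (c j * ((v : ℕ) : ZMod 4)) :=
            (Fintype.prod_sum (fun (j : Fin n) (v : Fin 2) =>
              chi (c j * ((v : ℕ) : ZMod 4)))).symm
        _ = ∏ j : Fin n, (1 + chi (c j)) := by
            refine Finset.prod_congr rfl fun j _ => ?_
            rw [Fin.sum_univ_two]
            norm_num [chi_zero]
    have h2 : ∑ x : Fin n → Fin 2, chi (f x) = ∑ cc : ZMod 4, (Ncount n f cc : GI) * chi cc := by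
      rw [← Finset.sum_fiberwise' Finset.univ f chi]
      refine Finset.sum_congr rfl fun cc _ => ?_
      rw [Finset.sum_const, Ncount, nsmul_eq_mul]
    rw [← h1, h2, sum_zmod4]
    apply Zsqrtd.ext
    · simp [chi_zero, show chi 1 = (⟨0,1⟩ : GI) from by decide,
        show chi 2 = (⟨-1,0⟩ : GI) from by decide,
        show chi 3 = (⟨0,-1⟩ : GI) from by decide, Zsqrtd.re_add, Zsqrtd.re_mul,
        Zsqrtd.re_natCast, Zsqrtd.im_natCast]
      ring
    · simp [chi_zero, show chi 1 = (⟨0,1⟩ : GI) from by decide,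
        show chi 2 = (⟨-1,0⟩ : GI) from by decide,
        show chi 3 = (⟨0,-1⟩ : GI) from by decide, Zsqrtd.im_add, Zsqrtd.im_mul,
        Zsqrtd.re_natCast, Zsqrtd.im_natCast]
      ring
  constructor
  · rintro ⟨i0, hi0, hwi⟩
    have hfac : 1 + chi (c i0) = 0 := by
      have hni : ¬ i0.1 < r := not_lt.2 hi0
      simp only [hc, hni, if_false, hwi]
      simpa using one_add_chi2
    have hz : (∏ j : Fin n, (1 + chi (c j))) = 0 :=
      Finset.prod_eq_zero (Finset.mem_univ i0) hfac
    rw [key] at hz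
    have hre := congrArg Zsqrtd.re hz
    have him := congrArg Zsqrtd.im hz
    simp only [Zsqrtd.re_zero, Zsqrtd.im_zero] at hre him
    constructor
    · have : (Ncount n f 0 : ℤ) = (Ncount n f 2 : ℤ) := by
        have h' : (Ncount n f 0 : ℤ) - (Ncount n f 2 : ℤ) = 0 := hre
        linarith
      exact_mod_cast this
    · have : (Ncount n f 1 : ℤ) = (Ncount n f 3 : ℤ) := by
        have h' : (Ncount n f 1 : ℤ) - (Ncount n f 3 : ℤ) = 0 := him
        linarith
      exact_mod_cast this
  · intro hw t s d m a b η ht hs hd hm hab hb3 hη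
    set P := Finset.univ.filter (fun j : Fin n => j.1 < r) with hP
    have hPcard : P.card = r := by
      have hPeq : P = (Finset.univ : Finset (Fin r)).map (Fin.castLEEmb hr) := by
        ext j
        simp only [hP, Finset.mem_filter, Finset.mem_univ, true_and, Finset.mem_map,
          Fin.castLEEmb, Function.Embedding.coeFn_mk]
        constructor
        · intro h; exact ⟨⟨j.1, h⟩, by simp [Fin.castLE, Fin.ext_iff]⟩
        · rintro ⟨k, rfl⟩; simpa [Fin.castLE] using k.2
      rw [hPeq, Finset.card_map, Finset.card_univ, Fintype.card_fin]
    have htr : t ≤ r := by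
      have hsub : (Finset.univ.filter fun j : Fin n => j.1 < r ∧ w j = 1) ⊆ P := by
        intro j hj
        simp only [Finset.mem_filter] at hj
        simp only [hP, Finset.mem_filter]
        exact ⟨hj.1, hj.2.1⟩
      have h1 := Finset.card_le_card hsub
      omega
    have hsplit : (∏ j : Fin n, (1 + chi (c j)))
        = (∏ j ∈ P, (1 + chi (c j))) *
          ∏ j ∈ Finset.univ.filter (fun j : Fin n => ¬ j.1 < r), (1 + chi (c j)) :=
      (Finset.prod_filter_mul_prod_filter_not Finset.univ _ _).symm
    have hcard2 : (Finset.univ.filter (fun j : Fin n => ¬ j.1 < r)).card = n - r := by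
      have hh := Finset.card_filter_add_card_filter_not
        (s := (Finset.univ : Finset (Fin n))) (p := fun j : Fin n => j.1 < r)
      rw [Finset.card_univ, Fintype.card_fin] at hh
      have : P.card + (Finset.univ.filter (fun j : Fin n => ¬ j.1 < r)).card = n := hh
      omega
    have h2nd : (∏ j ∈ Finset.univ.filter (fun j : Fin n => ¬ j.1 < r), (1 + chi (c j)))
        = 2 ^ (n - r) := by
      have hconst : ∀ j ∈ Finset.univ.filter (fun j : Fin n => ¬ j.1 < r),
          (1 + chi (c j)) = 2 := by
        intro j hj
        simp only [Finset.mem_filter] at hj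
        have hw0 : w j = 0 := hw j (not_lt.1 hj.2)
        simp only [hc, hj.2, if_false, hw0]
        simpa using one_add_chi0
      rw [Finset.prod_congr rfl hconst, Finset.prod_const, hcard2]
    have h1st : (∏ j ∈ P, (1 + chi (c j))) = AA ^ t * BB ^ (r - t) := by
      have hterm : ∀ j ∈ P, (1 + chi (c j)) = if w j = 1 then AA else BB := by
        intro j hj
        simp only [hP, Finset.mem_filter] at hj
        rcases fin2 (w j) with h | h
        · rw [if_neg (by simp [h])]
          simp only [hc, hj.2, if_true, h]
          simpa using one_add_chi1
        · rw [if_pos h]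
          simp only [hc, hj.2, if_true, h]
          simpa [show (1 + 2 : ZMod 4) = 3 by decide] using one_add_chi3
      rw [Finset.prod_congr rfl hterm, Finset.prod_ite, Finset.prod_const, Finset.prod_const]
      have hct : (P.filter fun j => w j = 1).card = t := by
        rw [ht, hP, Finset.filter_filter]
      have hcs : (P.filter fun j => ¬ w j = 1).card = r - t := by
        have hh := Finset.card_filter_add_card_filter_not (s := P)
          (p := fun j => w j = 1)
        rw [hPcard] at hh
        omega
      rw [hct, hcs]
    have keyval : AA ^ t * BB ^ (r - t) * 2 ^ (n - r)
        = ⟨(Ncount n f 0 : ℤ) - (Ncount n f 2 : ℤ),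
           (Ncount n f 1 : ℤ) - (Ncount n f 3 : ℤ)⟩ := by
      rw [← h1st, ← h2nd, ← hsplit, key]
    set E := n - r + d + 2 * a with hE
    set U := if s < t then AA else BB with hU
    have halg : AA ^ t * BB ^ (r - t) * 2 ^ (n - r)
        = ((((-1) ^ a * 2 ^ E : ℤ)) : GI) * U ^ b := by
      push_cast
      by_cases hlt : s < t
      · have hdt : d = s := by omega
        have htm : t = s + (4 * a + b) := by omega
        have hrts : r - t = s := by omega
        rw [hrts, htm, hU, if_pos hlt, pow_add, pow_add]
        calc AA ^ s * (AA ^ (4 * a) * AA ^ b) * BB ^ s * 2 ^ (n - r)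
            = (AA * BB) ^ s * (AA ^ 4) ^ a * 2 ^ (n - r) * AA ^ b := by
              rw [mul_pow, ← pow_mul]; ring
          _ = 2 ^ s * ((-1) ^ a * 2 ^ (2 * a)) * 2 ^ (n - r) * AA ^ b := by
              rw [AB_mul, AA_four, neg_four_pow]
          _ = (-1) ^ a * 2 ^ E * AA ^ b := by
              rw [hE, hdt, show n - r + s + 2 * a = s + 2 * a + (n - r) by ring,
                pow_add, pow_add]
              ring
      · have hdt : d = t := by omega
        have hrt : r - t = t + (4 * a + b) := by omega
        rw [hrt, hU, if_neg hlt, pow_add, pow_add]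
        calc AA ^ t * (BB ^ t * (BB ^ (4 * a) * BB ^ b)) * 2 ^ (n - r)
            = (AA * BB) ^ t * (BB ^ 4) ^ a * 2 ^ (n - r) * BB ^ b := by
              rw [mul_pow, ← pow_mul]; ring
          _ = 2 ^ t * ((-1) ^ a * 2 ^ (2 * a)) * 2 ^ (n - r) * BB ^ b := by
              rw [AB_mul, BB_four, neg_four_pow]
          _ = (-1) ^ a * 2 ^ E * BB ^ b := by
              rw [hE, hdt, show n - r + t + 2 * a = t + 2 * a + (n - r) by ring,
                pow_add, pow_add]
              ring
    have hcomp := comp_eq ((-1) ^ a * 2 ^ E) (U ^ b) _ _ (halg.symm.trans keyval)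
    obtain ⟨hre, him⟩ := hcomp
    have hrm : r = 2 * d + 4 * a + b := by omega
    refine ⟨?_, ?_, ?_, ?_⟩ <;> intro hb <;> subst hb
    · -- b = 0
      constructor
      · rw [hre, show ((2 * n - r) / 2 : ℕ) = E by omega]
        simp
      · rw [him]; simp
    · -- b = 1
      have hE1 : ((2 * n - r - 1) / 2 : ℕ) = E := by omega
      by_cases hlt : s < t
      · rw [hU, if_pos hlt] at hre him
        rw [hη, if_pos hlt]
        constructor
        · rw [hre, hE1, show (AA ^ 1).re = 1 by decide]; ring
        · rw [him, hE1, show (AA ^ 1).im = -1 by decide, pow_add]; ring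
      · rw [hU, if_neg hlt] at hre him
        rw [hη, if_neg hlt]
        constructor
        · rw [hre, hE1, show (BB ^ 1).re = 1 by decide]; ring
        · rw [him, hE1, show (BB ^ 1).im = 1 by decide, pow_add]; ring
    · -- b = 2
      have hE2 : ((2 * n - r) / 2 : ℕ) = E + 1 := by omega
      by_cases hlt : s < t
      · rw [hU, if_pos hlt] at hre him
        rw [hη, if_pos hlt]
        constructor
        · rw [hre, show (AA ^ 2).re = 0 by decide]; ring
        · rw [him, hE2, show (AA ^ 2).im = -2 by decide, pow_add, pow_add]; ring
      · rw [hU, if_neg hlt] at hre him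
        rw [hη, if_neg hlt]
        constructor
        · rw [hre, show (BB ^ 2).re = 0 by decide]; ring
        · rw [him, hE2, show (BB ^ 2).im = 2 by decide, pow_add, pow_add]; ring
    · -- b = 3
      have hE3 : ((2 * n - r - 1) / 2 : ℕ) = E + 1 := by omega
      by_cases hlt : s < t
      · rw [hU, if_pos hlt] at hre him
        rw [hη, if_pos hlt]
        constructor
        · rw [hre, hE3, show (AA ^ 3).re = -2 by decide, pow_add, pow_add]; ring
        · rw [him, hE3, show (AA ^ 3).im = -2 by decide, pow_add, pow_add]; ring
      · rw [hU, if_neg hlt] at hre him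
        rw [hη, if_neg hlt]
        constructor
        · rw [hre, hE3, show (BB ^ 3).re = -2 by decide, pow_add, pow_add]; ring
        · rw [him, hE3, show (BB ^ 3).im = 2 by decide, pow_add, pow_add]; ring
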